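/- arXiv:0912.4045 — 2 statements merged into one kernel-verified Lean document; each statement's English description precedes it below -/
import Mathlib

section
/- With the notation of the restricted eigenvalue conditions, for integers 1 ≤ s ≤ p/2 and m with m ≥ s and s+m ≤ p, define K(s,m,k₀,X)⁻¹ as the minimum over admissible nonzero v (i.e., ‖v_{J₀ᶜ}‖₁ ≤ k₀‖v_{J₀}‖₁ for some |J₀| ≤ s) of ‖Xv‖₂/(√n ‖v_{J₀m}‖₂), where J₀m = J₀ ∪ J_m and J_m indexes the m largest coordinates of v outside J₀. Then K(s,k₀,X) ≤ K(s,m,k₀,X) ≤ √(2+k₀²) · K(s,k₀,X). -/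
open Finset

noncomputable def l1 {p : ℕ} (v : Fin p → ℝ) : ℝ := ∑ i, |v i|
noncomputable def l2 {p : ℕ} (v : Fin p → ℝ) : ℝ := Real.sqrt (∑ i, (v i) ^ 2)

def restr {p : ℕ} (T : Finset (Fin p)) (v : Fin p → ℝ) : Fin p → ℝ :=
  fun i => if i ∈ T then v i else 0

/-- The set of ratios ‖Xv‖₂/(√n ‖v_{J₀}‖₂) over admissible pairs (J₀, v). -/
def ratios1 (n p s : ℕ) (k0 : ℝ) (X : Matrix (Fin n) (Fin p) ℝ) : Set ℝ :=
  { r | ∃ (J0 : Finset (Fin p)) (v : Fin p → ℝ), J0.card ≤ s ∧ v ≠ 0 ∧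
      l1 (restr J0ᶜ v) ≤ k0 * l1 (restr J0 v) ∧
      r = l2 (X.mulVec v) / (Real.sqrt n * l2 (restr J0 v)) }

/-- K(s,k₀,X) := (inf of the ratios)⁻¹. -/
noncomputable def Kre (n p s : ℕ) (k0 : ℝ) (X : Matrix (Fin n) (Fin p) ℝ) : ℝ :=
  (sInf (ratios1 n p s k0 X))⁻¹

/-- Ratios ‖Xv‖₂/(√n ‖v_{J₀m}‖₂), where J₀m = J₀ ∪ J_m and J_m indexes the
m largest coordinates of v outside J₀. -/
def ratiosM (n p s m : ℕ) (k0 : ℝ) (X : Matrix (Fin n) (Fin p) ℝ) : Set ℝ :=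
  { r | ∃ (J0 Jm : Finset (Fin p)) (v : Fin p → ℝ), J0.card ≤ s ∧ v ≠ 0 ∧
      l1 (restr J0ᶜ v) ≤ k0 * l1 (restr J0 v) ∧
      Jm.card = min m (p - J0.card) ∧ Disjoint Jm J0 ∧
      (∀ i ∈ Jm, ∀ j, j ∉ J0 → j ∉ Jm → |v j| ≤ |v i|) ∧
      r = l2 (X.mulVec v) / (Real.sqrt n * l2 (restr (J0 ∪ Jm) v)) }

/-- K(s,m,k₀,X) := (inf of those ratios)⁻¹. -/
noncomputable def KreM (n p s m : ℕ) (k0 : ℝ) (X : Matrix (Fin n) (Fin p) ℝ) : ℝ :=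
  (sInf (ratiosM n p s m k0 X))⁻¹

section aux
variable {p : ℕ}

lemma l1_restr_eq (T : Finset (Fin p)) (v : Fin p → ℝ) :
    l1 (restr T v) = ∑ i ∈ T, |v i| := by
  unfold l1 restr
  rw [← Finset.sum_subset (Finset.subset_univ T) (fun i _ hi => by simp [hi])]
  exact Finset.sum_congr rfl fun i hi => by simp [hi]

lemma l2_restr_eq (T : Finset (Fin p)) (v : Fin p → ℝ) :
    l2 (restr T v) = Real.sqrt (∑ i ∈ T, (v i) ^ 2) := by
  unfold l2 restr
  congr 1
  rw [← Finset.sum_subset (Finset.subset_univ T) (fun i _ hi => by simp [hi])]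
  exact Finset.sum_congr rfl fun i hi => by simp [hi]

lemma l1_nonneg (v : Fin p → ℝ) : 0 ≤ l1 v :=
  Finset.sum_nonneg fun i _ => abs_nonneg _

lemma l2_nonneg (v : Fin p → ℝ) : 0 ≤ l2 v := Real.sqrt_nonneg _

lemma l2_restr_mono {T T' : Finset (Fin p)} (h : T ⊆ T') (v : Fin p → ℝ) :
    l2 (restr T v) ≤ l2 (restr T' v) := by
  rw [l2_restr_eq, l2_restr_eq]
  exact Real.sqrt_le_sqrt (Finset.sum_le_sum_of_subset_of_nonneg h
    (fun i _ _ => sq_nonneg _))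

lemma l2_restr_pos {T : Finset (Fin p)} {v : Fin p → ℝ} (h : ∃ i ∈ T, v i ≠ 0) :
    0 < l2 (restr T v) := by
  obtain ⟨i, hiT, hvi⟩ := h
  rw [l2_restr_eq]
  apply Real.sqrt_pos.2
  apply Finset.sum_pos' (fun j _ => sq_nonneg _) ⟨i, hiT, by positivity⟩

lemma exists_topk (S : Finset (Fin p)) (f : Fin p → ℝ) (k : ℕ) (hk : k ≤ S.card) :
    ∃ T ⊆ S, T.card = k ∧ ∀ i ∈ T, ∀ j ∈ S, j ∉ T → f j ≤ f i := by
  induction k with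
  | zero => exact ⟨∅, Finset.empty_subset S, rfl, by simp⟩
  | succ k ih =>
    obtain ⟨T, hTS, hTc, hTtop⟩ := ih (Nat.le_of_succ_le hk)
    have hne : (S \ T).Nonempty := by
      rw [← Finset.card_pos, Finset.card_sdiff_of_subset hTS]
      omega
    obtain ⟨x, hx, hxmax⟩ := (S \ T).exists_max_image f hne
    have hxS := (Finset.mem_sdiff.1 hx).1
    have hxT := (Finset.mem_sdiff.1 hx).2
    refine ⟨insert x T, Finset.insert_subset hxS hTS, by rw [Finset.card_insert_of_notMem hxT, hTc], ?_⟩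
    intro i hi j hjS hj
    have hjT : j ∉ T := fun h => hj (Finset.mem_insert_of_mem h)
    rcases Finset.mem_insert.1 hi with rfl | hiT
    · exact hxmax j (Finset.mem_sdiff.2 ⟨hjS, hjT⟩)
    · exact hTtop i hiT j hjS hjT

lemma l1_restr_le_top (J0 T : Finset (Fin p)) (v : Fin p → ℝ) (hcard : J0.card ≤ T.card)
    (htop : ∀ i ∈ T, ∀ j ∉ T, |v j| ≤ |v i|) :
    ∑ i ∈ J0, |v i| ≤ ∑ i ∈ T, |v i| := by
  rw [← Finset.sum_inter_add_sum_sdiff J0 T (fun i => |v i|),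
      ← Finset.sum_inter_add_sum_sdiff T J0 (fun i => |v i|)]
  have hcd : (J0 \ T).card ≤ (T \ J0).card := by
    have h1 := Finset.card_sdiff_add_card_inter J0 T
    have h2 := Finset.card_sdiff_add_card_inter T J0
    rw [Finset.inter_comm] at h2
    omega
  have hinter : ∑ i ∈ J0 ∩ T, |v i| = ∑ i ∈ T ∩ J0, |v i| := by rw [Finset.inter_comm]
  rw [hinter]
  gcongr ?_ + ?_
  · exact le_refl _
  rcases Finset.eq_empty_or_nonempty (J0 \ T) with he | hne
  · rw [he]; simp
    exact Finset.sum_nonneg fun i _ => abs_nonneg _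
  · have hDne : (T \ J0).Nonempty := by
      rw [← Finset.card_pos]
      have := Finset.card_pos.2 hne
      omega
    set a := (T \ J0).inf' hDne (fun i => |v i|) with ha
    have ha0 : 0 ≤ a := Finset.le_inf' hDne _ fun i _ => abs_nonneg _
    calc ∑ i ∈ J0 \ T, |v i| ≤ (J0 \ T).card • a := by
          apply Finset.sum_le_card_nsmul
          intro j hj
          apply Finset.le_inf' hDne
          intro i hi
          exact htop i (Finset.mem_sdiff.1 hi).1 j (Finset.mem_sdiff.1 hj).2
      _ ≤ (T \ J0).card • a := by
          simp only [nsmul_eq_mul]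
          exact mul_le_mul_of_nonneg_right (Nat.cast_le.2 hcd) ha0
      _ ≤ ∑ i ∈ T \ J0, |v i| := Finset.card_nsmul_le_sum _ _ _ fun i hi => Finset.inf'_le _ hi

lemma l1_compl (T : Finset (Fin p)) (v : Fin p → ℝ) :
    l1 (restr T v) + l1 (restr Tᶜ v) = l1 v := by
  rw [l1_restr_eq, l1_restr_eq, l1]; exact Finset.sum_add_sum_compl T (fun i => |v i|)

end aux

lemma denom_pos {p : ℕ} {k0 : ℝ} (hk0 : 0 < k0) {J0 : Finset (Fin p)} {v : Fin p → ℝ}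
    (hv : v ≠ 0) (hk : l1 (restr J0ᶜ v) ≤ k0 * l1 (restr J0 v)) :
    0 < l2 (restr J0 v) := by
  apply l2_restr_pos
  by_contra h
  push_neg at h
  have h1 : l1 (restr J0 v) = 0 := by
    rw [l1_restr_eq]; exact Finset.sum_eq_zero fun i hi => by rw [h i hi, abs_zero]
  have h2 : l1 (restr J0ᶜ v) = 0 := by
    refine le_antisymm ?_ (l1_nonneg _)
    rw [h1] at hk; linarith
  apply hv
  funext i
  by_cases hiJ : i ∈ J0
  · exact h i hiJ
  · rw [l1_restr_eq] at h2
    have := (Finset.sum_eq_zero_iff_of_nonneg (fun j _ => abs_nonneg (v j))).1 h2 i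
      (Finset.mem_compl.2 hiJ)
    exact abs_eq_zero.1 this

lemma partA {n p s m : ℕ} {k0 : ℝ} (hn : 1 ≤ n)
    (hk0 : 0 < k0) (X : Matrix (Fin n) (Fin p) ℝ) {r : ℝ}
    (hr : r ∈ ratios1 n p s k0 X) :
    ∃ r' ∈ ratiosM n p s m k0 X, r' ≤ r := by
  obtain ⟨J0, v, hJ0, hv, hk, rfl⟩ := hr
  obtain ⟨Jm, hJmS, hJmc, hJmtop⟩ := exists_topk J0ᶜ (fun i => |v i|) (min m (p - J0.card)) (by
    rw [Finset.card_compl, Fintype.card_fin]; exact min_le_right _ _)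
  have hpos : 0 < l2 (restr J0 v) := denom_pos hk0 hv hk
  have hnpos : (0:ℝ) < Real.sqrt n := Real.sqrt_pos.2 (by exact_mod_cast Nat.pos_of_ne_zero (by omega))
  refine ⟨_, ⟨J0, Jm, v, hJ0, hv, hk, hJmc, ?_, ?_, rfl⟩, ?_⟩
  · exact Finset.disjoint_left.2 fun a ha haJ0 => (Finset.mem_compl.1 (hJmS ha)) haJ0
  · intro i hi j hj hjm
    exact hJmtop i hi j (Finset.mem_compl.2 hj) hjm
  · have hd : 0 < Real.sqrt n * l2 (restr J0 v) := mul_pos hnpos hpos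
    have hmono : Real.sqrt n * l2 (restr J0 v) ≤ Real.sqrt n * l2 (restr (J0 ∪ Jm) v) :=
      mul_le_mul_of_nonneg_left (l2_restr_mono Finset.subset_union_left v) (Real.sqrt_nonneg _)
    exact div_le_div_of_nonneg_left (l2_nonneg _) hd hmono

lemma partB {n p s m : ℕ} {k0 : ℝ} (hn : 1 ≤ n) (hs : 1 ≤ s) (hsp : 2 * s ≤ p)
    (hm : s ≤ m) (hk0 : 0 < k0) (X : Matrix (Fin n) (Fin p) ℝ) {r' : ℝ}
    (hr' : r' ∈ ratiosM n p s m k0 X) :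
    ∃ r ∈ ratios1 n p s k0 X, r ≤ Real.sqrt (2 + k0 ^ 2) * r' := by
  obtain ⟨J0, Jm, v, hJ0, hv, hk, hJmc, hdisj, htopm, rfl⟩ := hr'
  obtain ⟨T, -, hTc, hTtop'⟩ := exists_topk Finset.univ (fun i => |v i|) s (by
    rw [Finset.card_univ, Fintype.card_fin]; omega)
  have htop' : ∀ i ∈ T, ∀ j, j ∉ T → |v j| ≤ |v i| :=
    fun i hi j hj => hTtop' i hi j (Finset.mem_univ j) hj
  obtain ⟨j0, hj0⟩ := Function.ne_iff.1 hv
  -- T captures a nonzero coordinate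
  have hTne : T.Nonempty := Finset.card_pos.1 (by omega)
  have hTpos : ∃ i ∈ T, v i ≠ 0 := by
    by_contra h
    push_neg at h
    have hj0T : j0 ∉ T := fun hmem => hj0 (h j0 hmem)
    obtain ⟨i, hi⟩ := hTne
    have h1 := htop' i hi j0 hj0T
    rw [h i hi, abs_zero] at h1
    exact hj0 (abs_eq_zero.1 (le_antisymm h1 (abs_nonneg _)))
  have hl2T : 0 < l2 (restr T v) := l2_restr_pos hTpos
  -- positivity of l2 on J0 ∪ Jm
  have hJmne : Jm.Nonempty := by
    apply Finset.card_pos.1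
    rw [hJmc]
    omega
  have hMpos : ∃ i ∈ J0 ∪ Jm, v i ≠ 0 := by
    by_contra h
    push_neg at h
    have hj0M : j0 ∉ J0 ∪ Jm := fun hmem => hj0 (h j0 hmem)
    obtain ⟨i, hi⟩ := hJmne
    have h1 := htopm i hi j0 (fun hx => hj0M (Finset.mem_union_left _ hx))
      (fun hx => hj0M (Finset.mem_union_right _ hx))
    rw [h i (Finset.mem_union_right _ hi), abs_zero] at h1
    exact hj0 (abs_eq_zero.1 (le_antisymm h1 (abs_nonneg _)))
  have hl2M : 0 < l2 (restr (J0 ∪ Jm) v) := l2_restr_pos hMpos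
  -- ℓ1 comparison and admissibility of T
  have hl1 : l1 (restr J0 v) ≤ l1 (restr T v) := by
    rw [l1_restr_eq, l1_restr_eq]
    exact l1_restr_le_top J0 T v (by omega) htop'
  have hadm : l1 (restr Tᶜ v) ≤ k0 * l1 (restr T v) := by
    have e1 := l1_compl T v
    have e2 := l1_compl J0 v
    have h3 : k0 * l1 (restr J0 v) ≤ k0 * l1 (restr T v) :=
      mul_le_mul_of_nonneg_left hl1 hk0.le
    linarith
  -- the key quadratic bound
  set SQ := ∑ i ∈ T, (v i) ^ 2 with hSQ
  have hSQ0 : 0 ≤ SQ := Finset.sum_nonneg fun i _ => sq_nonneg _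
  have hSQpos : 0 < SQ := by
    have := hl2T
    rw [l2_restr_eq] at this
    exact Real.sqrt_pos.1 this
  have hs0 : (0:ℝ) < s := by exact_mod_cast hs
  set b := Real.sqrt (SQ / s) with hbdef
  have hb0 : 0 ≤ b := Real.sqrt_nonneg _
  have hb : ∀ j, j ∉ T → |v j| ≤ b := by
    intro j hj
    have hsum : (T.card) • ((v j) ^ 2) ≤ SQ := by
      apply Finset.card_nsmul_le_sum
      intro i hi
      have h1 := htop' i hi j hj
      nlinarith [abs_nonneg (v j), sq_abs (v i), sq_abs (v j)]
    rw [hTc, nsmul_eq_mul] at hsum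
    have h2 : (v j) ^ 2 ≤ SQ / s := by
      rw [le_div_iff₀ hs0]; linarith
    calc |v j| = Real.sqrt ((v j) ^ 2) := (Real.sqrt_sq_eq_abs _).symm
      _ ≤ b := Real.sqrt_le_sqrt h2
  -- Cauchy–Schwarz
  have hCS : l1 (restr T v) ≤ Real.sqrt s * Real.sqrt SQ := by
    rw [l1_restr_eq]
    have h := Finset.sum_mul_sq_le_sq_mul_sq T (fun _ => (1:ℝ)) (fun i => |v i|)
    simp only [one_pow, one_mul, sq_abs, Finset.sum_const, nsmul_eq_mul, mul_one, hTc] at h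
    have h2 : (∑ i ∈ T, |v i|) ^ 2 ≤ (s:ℝ) * SQ := h
    calc ∑ i ∈ T, |v i| = Real.sqrt ((∑ i ∈ T, |v i|) ^ 2) :=
          (Real.sqrt_sq (Finset.sum_nonneg fun i _ => abs_nonneg _)).symm
      _ ≤ Real.sqrt ((s:ℝ) * SQ) := Real.sqrt_le_sqrt h2
      _ = Real.sqrt s * Real.sqrt SQ := Real.sqrt_mul (by positivity) _
  have hbs : b * Real.sqrt s = Real.sqrt SQ := by
    rw [hbdef, ← Real.sqrt_mul (by positivity), div_mul_cancel₀ _ (ne_of_gt hs0)]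
  -- tail bound
  have hT2 : ∑ j ∈ (J0 ∪ Jm) \ T, (v j) ^ 2 ≤ k0 * SQ := by
    have step1 : ∑ j ∈ (J0 ∪ Jm) \ T, (v j) ^ 2 ≤ b * ∑ j ∈ (J0 ∪ Jm) \ T, |v j| := by
      rw [Finset.mul_sum]
      apply Finset.sum_le_sum
      intro j hj
      have hjb := hb j (Finset.mem_sdiff.1 hj).2
      nlinarith [abs_nonneg (v j), sq_abs (v j)]
    have step2 : ∑ j ∈ (J0 ∪ Jm) \ T, |v j| ≤ l1 (restr Tᶜ v) := by
      rw [l1_restr_eq]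
      apply Finset.sum_le_sum_of_subset_of_nonneg
      · intro j hj
        exact Finset.mem_compl.2 (Finset.mem_sdiff.1 hj).2
      · intro j _ _; exact abs_nonneg _
    have step3 : b * ∑ j ∈ (J0 ∪ Jm) \ T, |v j| ≤ b * (k0 * (Real.sqrt s * Real.sqrt SQ)) := by
      apply mul_le_mul_of_nonneg_left _ hb0
      calc ∑ j ∈ (J0 ∪ Jm) \ T, |v j| ≤ l1 (restr Tᶜ v) := step2
        _ ≤ k0 * l1 (restr T v) := hadm
        _ ≤ k0 * (Real.sqrt s * Real.sqrt SQ) := mul_le_mul_of_nonneg_left hCS hk0.le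
    have step4 : b * (k0 * (Real.sqrt s * Real.sqrt SQ)) = k0 * SQ := by
      have : b * Real.sqrt s * Real.sqrt SQ = SQ := by
        rw [hbs, Real.mul_self_sqrt hSQ0]
      nlinarith [this]
    linarith
  have hmain : ∑ i ∈ J0 ∪ Jm, (v i) ^ 2 ≤ (2 + k0 ^ 2) * SQ := by
    have hsplit := Finset.sum_inter_add_sum_sdiff (J0 ∪ Jm) T (fun i => (v i) ^ 2)
    have h1 : ∑ i ∈ (J0 ∪ Jm) ∩ T, (v i) ^ 2 ≤ SQ :=
      Finset.sum_le_sum_of_subset_of_nonneg Finset.inter_subset_right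
        (fun i _ _ => sq_nonneg _)
    nlinarith [hT2, hSQpos, sq_nonneg (k0 - 1)]
  have hl2le : l2 (restr (J0 ∪ Jm) v) ≤ Real.sqrt (2 + k0 ^ 2) * l2 (restr T v) := by
    rw [l2_restr_eq, l2_restr_eq, ← Real.sqrt_mul (by positivity)]
    exact Real.sqrt_le_sqrt hmain
  -- assemble
  have hnpos : (0:ℝ) < Real.sqrt n := Real.sqrt_pos.2 (by exact_mod_cast Nat.pos_of_ne_zero (by omega))
  refine ⟨_, ⟨T, v, le_of_eq hTc, hv, hadm, rfl⟩, ?_⟩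
  rw [mul_div_assoc']
  rw [div_le_div_iff₀ (mul_pos hnpos hl2T) (mul_pos hnpos hl2M)]
  calc l2 (X.mulVec v) * (Real.sqrt n * l2 (restr (J0 ∪ Jm) v))
      ≤ l2 (X.mulVec v) * (Real.sqrt n * (Real.sqrt (2 + k0 ^ 2) * l2 (restr T v))) := by
        apply mul_le_mul_of_nonneg_left _ (l2_nonneg _)
        exact mul_le_mul_of_nonneg_left hl2le (Real.sqrt_nonneg _)
    _ = Real.sqrt (2 + k0 ^ 2) * l2 (X.mulVec v) * (Real.sqrt n * l2 (restr T v)) := by ring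


/-- K(s,k₀,X) ≤ K(s,m,k₀,X) ≤ √(2+k₀²) · K(s,k₀,X). -/
theorem stmt5 (n p s m : ℕ) (k0 : ℝ) (hn : 1 ≤ n) (hs : 1 ≤ s) (hsp : 2 * s ≤ p)
    (hm : s ≤ m) (hmp : s + m ≤ p)
    (hk0 : 0 < k0) (X : Matrix (Fin n) (Fin p) ℝ)
    (hRE : 0 < sInf (ratios1 n p s k0 X)) :
    Kre n p s k0 X ≤ KreM n p s m k0 X ∧
      KreM n p s m k0 X ≤ Real.sqrt (2 + k0 ^ 2) * Kre n p s k0 X := by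
  have hcpos : 0 < Real.sqrt (2 + k0 ^ 2) := Real.sqrt_pos.2 (by positivity)
  have ne1 : (ratios1 n p s k0 X).Nonempty := by
    by_contra h
    rw [Set.not_nonempty_iff_eq_empty] at h
    rw [h, Real.sInf_empty] at hRE
    exact lt_irrefl 0 hRE
  have bdd1 : BddBelow (ratios1 n p s k0 X) := by
    refine ⟨0, fun r hr => ?_⟩
    obtain ⟨J0, v, -, -, -, rfl⟩ := hr
    exact div_nonneg (l2_nonneg _) (mul_nonneg (Real.sqrt_nonneg _) (l2_nonneg _))
  have bddM : BddBelow (ratiosM n p s m k0 X) := by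
    refine ⟨0, fun r hr => ?_⟩
    obtain ⟨J0, Jm, v, -, -, -, -, -, -, rfl⟩ := hr
    exact div_nonneg (l2_nonneg _) (mul_nonneg (Real.sqrt_nonneg _) (l2_nonneg _))
  have neM : (ratiosM n p s m k0 X).Nonempty := by
    obtain ⟨r, hr⟩ := ne1
    obtain ⟨r', hr', -⟩ := partA (m := m) hn hk0 X hr
    exact ⟨r', hr'⟩
  have hMle1 : sInf (ratiosM n p s m k0 X) ≤ sInf (ratios1 n p s k0 X) := by
    apply le_csInf ne1
    intro r hr
    obtain ⟨r', hr', hle⟩ := partA (m := m) hn hk0 X hr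
    exact (csInf_le bddM hr').trans hle
  have hlow : sInf (ratios1 n p s k0 X) / Real.sqrt (2 + k0 ^ 2) ≤
      sInf (ratiosM n p s m k0 X) := by
    apply le_csInf neM
    intro r' hr'
    obtain ⟨r, hr, hle⟩ := partB hn hs hsp hm hk0 X hr'
    have h1 : sInf (ratios1 n p s k0 X) ≤ Real.sqrt (2 + k0 ^ 2) * r' :=
      (csInf_le bdd1 hr).trans hle
    rw [div_le_iff₀ hcpos]
    linarith
  have hMpos : 0 < sInf (ratiosM n p s m k0 X) :=
    lt_of_lt_of_le (div_pos hRE hcpos) hlow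
  constructor
  · show (sInf (ratios1 n p s k0 X))⁻¹ ≤ (sInf (ratiosM n p s m k0 X))⁻¹
    gcongr
  · show (sInf (ratiosM n p s m k0 X))⁻¹ ≤ Real.sqrt (2 + k0 ^ 2) * (sInf (ratios1 n p s k0 X))⁻¹
    have h1 : (sInf (ratiosM n p s m k0 X))⁻¹ ≤
        (sInf (ratios1 n p s k0 X) / Real.sqrt (2 + k0 ^ 2))⁻¹ := by
      gcongr
    rw [inv_div] at h1
    calc (sInf (ratiosM n p s m k0 X))⁻¹
        ≤ Real.sqrt (2 + k0 ^ 2) / sInf (ratios1 n p s k0 X) := h1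
      _ = Real.sqrt (2 + k0 ^ 2) * (sInf (ratios1 n p s k0 X))⁻¹ := div_eq_mul_inv _ _
end

section
/- For every deterministic δ ∈ ℝ^p with ‖Σ^{1/2}δ‖₂ = 1 satisfying the cone condition of E_s, and for any standard Gaussian h ∈ ℝ^p (deterministic inequality), one has |⟨h, Σ^{1/2}δ⟩| ≤ (k₀+2) K(s,k₀,Σ) · sup_{t ∈ U_s} |⟨t, Σ^{1/2}h⟩|, where U_s = {t ∈ S^{p−1} : |supp(t)| ≤ s}. -/
open Finset

/-- sparse unit sphere U_s -/
def Us (p s : ℕ) : Set (Fin p → ℝ) :=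
  { t | l2 t = 1 ∧ (Finset.univ.filter fun i => t i ≠ 0).card ≤ s }

lemma l1_restr {p : ℕ} (T : Finset (Fin p)) (v : Fin p → ℝ) :
    l1 (restr T v) = ∑ i ∈ T, |v i| := by
  unfold l1 restr
  have h1 : ∀ i ∈ Finset.univ, |if i ∈ T then v i else 0| = if i ∈ T then |v i| else 0 :=
    fun i _ => by split <;> simp
  rw [Finset.sum_congr rfl h1, Finset.sum_ite_mem, Finset.univ_inter]

lemma sum_sq_restr {p : ℕ} (T : Finset (Fin p)) (v : Fin p → ℝ) :
    ∑ i, (restr T v i) ^ 2 = ∑ i ∈ T, v i ^ 2 := by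
  unfold restr
  have h1 : ∀ i ∈ Finset.univ, (if i ∈ T then v i else 0) ^ 2 = if i ∈ T then v i ^ 2 else 0 :=
    fun i _ => by split <;> simp
  rw [Finset.sum_congr rfl h1, Finset.sum_ite_mem, Finset.univ_inter]

lemma l2_restr {p : ℕ} (T : Finset (Fin p)) (v : Fin p → ℝ) :
    l2 (restr T v) = Real.sqrt (∑ i ∈ T, v i ^ 2) := by
  unfold l2; rw [sum_sq_restr]

/-- select the n largest (w.r.t. f) elements of A -/
lemma select {p : ℕ} (f : Fin p → ℝ) (n : ℕ) :
    ∀ A : Finset (Fin p), n ≤ A.card →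
      ∃ B ⊆ A, B.card = n ∧ ∀ i ∈ B, ∀ j ∈ A \ B, f j ≤ f i := by
  induction n with
  | zero => intro A _; exact ⟨∅, Finset.empty_subset _, rfl, by simp⟩
  | succ n ih =>
    intro A hA
    obtain ⟨B, hBA, hBcard, hBmax⟩ := ih A (Nat.le_of_succ_le hA)
    have hne : (A \ B).Nonempty := by
      rw [← Finset.card_pos, Finset.card_sdiff_of_subset hBA, hBcard]
      omega
    obtain ⟨i0, hi0, hi0max⟩ := Finset.exists_max_image (A \ B) f hne
    refine ⟨insert i0 B, ?_, ?_, ?_⟩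
    · exact Finset.insert_subset (Finset.mem_sdiff.mp hi0).1 hBA
    · rw [Finset.card_insert_of_notMem (Finset.mem_sdiff.mp hi0).2, hBcard]
    · intro i hi j hj
      have hj' : j ∈ A \ B := by
        rw [Finset.mem_sdiff] at hj ⊢
        exact ⟨hj.1, fun hjB => hj.2 (Finset.mem_insert_of_mem hjB)⟩
      rcases Finset.mem_insert.mp hi with rfl | hiB
      · exact hi0max j hj'
      · exact hBmax i hiB j hj'

lemma l2_le_of_bdd {p s : ℕ} (δ : Fin p → ℝ) (c : ℝ) (hc : 0 ≤ c)
    (B : Finset (Fin p)) (hBc : ∀ i ∈ B, |δ i| ≤ c) (hBcard : B.card ≤ s) :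
    l2 (restr B δ) ≤ Real.sqrt s * c := by
  rw [l2_restr]
  have h1 : ∑ i ∈ B, δ i ^ 2 ≤ (s : ℝ) * c ^ 2 := by
    calc ∑ i ∈ B, δ i ^ 2 ≤ ∑ i ∈ B, c ^ 2 := by
          refine Finset.sum_le_sum fun i hi => ?_
          rw [← sq_abs]
          exact pow_le_pow_left₀ (abs_nonneg _) (hBc i hi) 2
      _ = (B.card : ℝ) * c ^ 2 := by rw [Finset.sum_const, nsmul_eq_mul]
      _ ≤ (s : ℝ) * c ^ 2 := by
          apply mul_le_mul_of_nonneg_right _ (by positivity)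
          exact_mod_cast hBcard
  calc Real.sqrt (∑ i ∈ B, δ i ^ 2) ≤ Real.sqrt ((s:ℝ) * c ^ 2) := Real.sqrt_le_sqrt h1
    _ = Real.sqrt s * c := by rw [Real.sqrt_mul (Nat.cast_nonneg s), Real.sqrt_sq hc]

/-- key shelling lemma -/
lemma key {p s : ℕ} (hs : 1 ≤ s) (δ w : Fin p → ℝ) (S : ℝ) (hS : 0 ≤ S)
    (hB : ∀ B : Finset (Fin p), B.card ≤ s →
      |∑ i ∈ B, w i * δ i| ≤ l2 (restr B δ) * S) :
    ∀ A : Finset (Fin p), ∀ c : ℝ, 0 ≤ c → (∀ i ∈ A, |δ i| ≤ c) →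
      |∑ i ∈ A, w i * δ i| ≤
        S * (Real.sqrt s * c + (∑ i ∈ A, |δ i|) / Real.sqrt s) := by
  intro A
  induction A using Finset.strongInduction with
  | _ A ih =>
    intro c hc hAc
    have hsqs : (0:ℝ) < Real.sqrt s := Real.sqrt_pos.mpr (by exact_mod_cast hs)
    have hl1A : (0:ℝ) ≤ ∑ i ∈ A, |δ i| := Finset.sum_nonneg fun i _ => abs_nonneg _
    by_cases hcard : A.card ≤ s
    · calc |∑ i ∈ A, w i * δ i| ≤ l2 (restr A δ) * S := hB A hcard
        _ ≤ (Real.sqrt s * c) * S :=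
            mul_le_mul_of_nonneg_right (l2_le_of_bdd δ c hc A hAc hcard) hS
        _ ≤ S * (Real.sqrt s * c + (∑ i ∈ A, |δ i|) / Real.sqrt s) := by
            rw [mul_comm]
            refine mul_le_mul_of_nonneg_left ?_ hS
            exact le_add_of_nonneg_right (by positivity)
    · push_neg at hcard
      obtain ⟨B, hBA, hBcard, hBmax⟩ := select (fun i => |δ i|) s A (le_of_lt hcard)
      have hBne : B.Nonempty := Finset.card_pos.mp (by omega)
      obtain ⟨i1, hi1, hi1min⟩ := Finset.exists_min_image B (fun i => |δ i|) hBne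
      set c' := |δ i1| with hc'
      have hc'0 : 0 ≤ c' := abs_nonneg _
      have hAB : A \ B ⊂ A := by
        refine Finset.sdiff_ssubset ?_ hBne
        exact hBA
      have hABc : ∀ j ∈ A \ B, |δ j| ≤ c' := fun j hj => hBmax i1 hi1 j hj
      have hIH := ih (A \ B) hAB c' hc'0 hABc
      have hsplit : ∑ i ∈ A, w i * δ i = ∑ i ∈ B, w i * δ i + ∑ i ∈ A \ B, w i * δ i := by
        rw [add_comm, Finset.sum_sdiff_eq_sub hBA]; ring
      have hBbound : |∑ i ∈ B, w i * δ i| ≤ S * (Real.sqrt s * c) := by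
        calc |∑ i ∈ B, w i * δ i| ≤ l2 (restr B δ) * S := hB B (le_of_eq hBcard)
          _ ≤ (Real.sqrt s * c) * S := by
              refine mul_le_mul_of_nonneg_right ?_ hS
              exact l2_le_of_bdd δ c hc B (fun i hi => hAc i (hBA hi)) (le_of_eq hBcard)
          _ = S * (Real.sqrt s * c) := mul_comm _ _
      -- √s * c' ≤ (∑ i ∈ B, |δ i|) / √s
      have hc'B : Real.sqrt s * c' ≤ (∑ i ∈ B, |δ i|) / Real.sqrt s := by
        rw [le_div_iff₀ hsqs]
        have : Real.sqrt s * c' * Real.sqrt s = (s : ℝ) * c' := by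
          rw [mul_comm (Real.sqrt ↑s) c', mul_assoc, Real.mul_self_sqrt (Nat.cast_nonneg s)]
          ring
        rw [this]
        calc (s:ℝ) * c' = ∑ _i ∈ B, c' := by rw [Finset.sum_const, nsmul_eq_mul, hBcard]
          _ ≤ ∑ i ∈ B, |δ i| := Finset.sum_le_sum fun i hi => hi1min i hi
      have hsum : ∑ i ∈ B, |δ i| + ∑ i ∈ A \ B, |δ i| = ∑ i ∈ A, |δ i| := by
        rw [add_comm, Finset.sum_sdiff_eq_sub hBA]; ring
      calc |∑ i ∈ A, w i * δ i|
          ≤ |∑ i ∈ B, w i * δ i| + |∑ i ∈ A \ B, w i * δ i| := by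
            rw [hsplit]; exact abs_add_le _ _
        _ ≤ S * (Real.sqrt s * c) + S * (Real.sqrt s * c' + (∑ i ∈ A \ B, |δ i|) / Real.sqrt s) :=
            add_le_add hBbound hIH
        _ ≤ S * (Real.sqrt s * c) + S * ((∑ i ∈ B, |δ i|) / Real.sqrt s + (∑ i ∈ A \ B, |δ i|) / Real.sqrt s) := by
            refine add_le_add_right (mul_le_mul_of_nonneg_left (add_le_add_left hc'B _) hS) _
        _ = S * (Real.sqrt s * c + (∑ i ∈ A, |δ i|) / Real.sqrt s) := by
            rw [← hsum]; field_simp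

/-- pointwise inequality
|⟨h, Σ^{1/2}δ⟩| ≤ (k₀+2) K(s,k₀,Σ) sup_{t∈U_s} |⟨t, Σ^{1/2}h⟩| for δ ∈ E_s. -/
theorem stmt12 (p s : ℕ) (hs : 1 ≤ s) (hsp : 2 * s ≤ p) (k0 : ℝ) (hk0 : 0 < k0)
    (Sig R : Matrix (Fin p) (Fin p) ℝ)
    (hpsd : Sig.PosSemidef) (hRpsd : R.PosSemidef) (hRsq : R * R = Sig)
    (K : ℝ) (hK : 0 < K)
    -- RE(s,k₀,Σ) with constant K
    (hRE : ∀ J0 : Finset (Fin p), J0.card ≤ s → ∀ v : Fin p → ℝ, v ≠ 0 →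
      l1 (restr J0ᶜ v) ≤ k0 * l1 (restr J0 v) → l2 (restr J0 v) ≤ K * l2 (R.mulVec v))
    -- δ ∈ E_s
    (δ : Fin p → ℝ) (hδnorm : l2 (R.mulVec δ) = 1)
    (T0 : Finset (Fin p)) (hT0card : T0.card = s)
    (hT0max : ∀ i ∈ T0, ∀ j ∉ T0, |δ j| ≤ |δ i|)
    (hcone : l1 (restr T0ᶜ δ) ≤ k0 * l1 (restr T0 δ))
    (h : Fin p → ℝ) :
    |∑ i, h i * (R.mulVec δ) i| ≤
      (k0 + 2) * K * ⨆ t ∈ Us p s, |∑ i, t i * (R.mulVec h) i| := by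
  classical
  set w := R.mulVec h with hw
  set S := ⨆ t ∈ Us p s, |∑ i, t i * w i| with hSdef
  have hsqs : (0:ℝ) < Real.sqrt s := Real.sqrt_pos.mpr (by exact_mod_cast hs)
  -- symmetry of R
  have hsym : ∀ i j, R i j = R j i := by
    intro i j
    have := hRpsd.isHermitian.apply j i
    simpa using this
  -- rewrite LHS
  have hLHS : ∑ i, h i * (R.mulVec δ) i = ∑ i, w i * δ i := by
    simp only [hw, Matrix.mulVec, dotProduct]
    calc ∑ i, h i * ∑ j, R i j * δ j = ∑ i, ∑ j, h i * (R i j * δ j) := by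
          simp [Finset.mul_sum]
      _ = ∑ j, ∑ i, h i * (R i j * δ j) := Finset.sum_comm
      _ = ∑ j, (∑ i, R j i * h i) * δ j := by
          refine Finset.sum_congr rfl fun j _ => ?_
          rw [Finset.sum_mul]
          exact Finset.sum_congr rfl fun i _ => by rw [hsym i j]; ring
  -- properties of S
  have hCS : ∀ t : Fin p → ℝ, l2 t = 1 → |∑ i, t i * w i| ≤ l2 w := by
    intro t ht
    have hcs := Finset.sum_mul_sq_le_sq_mul_sq Finset.univ t w
    rw [← Real.sqrt_sq_eq_abs]
    calc Real.sqrt ((∑ i, t i * w i) ^ 2)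
        ≤ Real.sqrt ((∑ i, t i ^ 2) * (∑ i, w i ^ 2)) := Real.sqrt_le_sqrt hcs
      _ = l2 t * l2 w := by
          rw [Real.sqrt_mul (Finset.sum_nonneg fun i _ => sq_nonneg _)]; rfl
      _ = l2 w := by rw [ht, one_mul]
  have hg_le : ∀ t : Fin p → ℝ,
      (⨆ _ : t ∈ Us p s, |∑ i, t i * w i|) ≤ max (l2 w) 0 := by
    intro t
    by_cases ht : t ∈ Us p s
    · rw [ciSup_pos ht]; exact le_max_of_le_left (hCS t ht.1)
    · haveI : IsEmpty (t ∈ Us p s) := ⟨ht⟩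
      rw [Real.iSup_of_isEmpty]; exact le_max_right _ _
  have hbdd : BddAbove (Set.range fun t : Fin p → ℝ =>
      ⨆ _ : t ∈ Us p s, |∑ i, t i * w i|) := by
    refine ⟨max (l2 w) 0, ?_⟩
    rintro x ⟨t, rfl⟩
    exact hg_le t
  have hfS : ∀ t ∈ Us p s, |∑ i, t i * w i| ≤ S := by
    intro t ht
    have hle := le_ciSup hbdd t
    rwa [ciSup_pos ht] at hle
  have hS0 : 0 ≤ S := by
    have hp0 : 0 < p := by omega
    set i0 : Fin p := ⟨0, hp0⟩ with hi0
    set t0 : Fin p → ℝ := fun i => if i = i0 then 1 else 0 with ht0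
    have ht0Us : t0 ∈ Us p s := by
      constructor
      · unfold l2
        have : ∑ i, t0 i ^ 2 = 1 := by
          rw [ht0]
          rw [Finset.sum_eq_single i0]
          · simp
          · intro b _ hb; simp [hb]
          · simp
        rw [this, Real.sqrt_one]
      · have hsub : (Finset.univ.filter fun i => t0 i ≠ 0) ⊆ {i0} := by
          intro i hi
          rw [Finset.mem_filter] at hi
          rw [Finset.mem_singleton]
          by_contra hne
          exact hi.2 (by simp [ht0, hne])
        calc (Finset.univ.filter fun i => t0 i ≠ 0).card ≤ ({i0} : Finset (Fin p)).card :=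
              Finset.card_le_card hsub
          _ = 1 := Finset.card_singleton _
          _ ≤ s := hs
    exact le_trans (abs_nonneg _) (hfS t0 ht0Us)
  -- the block bound hB
  have hB : ∀ B : Finset (Fin p), B.card ≤ s →
      |∑ i ∈ B, w i * δ i| ≤ l2 (restr B δ) * S := by
    intro B hBs
    have hsum_eq : ∑ i ∈ B, w i * δ i = ∑ i, restr B δ i * w i := by
      calc ∑ i ∈ B, w i * δ i = ∑ i ∈ Finset.univ ∩ B, w i * δ i := by
            rw [Finset.univ_inter]
        _ = ∑ i, if i ∈ B then w i * δ i else 0 := (Finset.sum_ite_mem _ _ _).symm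
        _ = ∑ i, restr B δ i * w i :=
            Finset.sum_congr rfl fun i _ => by unfold restr; split <;> ring
    set n := l2 (restr B δ) with hn
    have hn0 : 0 ≤ n := Real.sqrt_nonneg _
    rcases eq_or_lt_of_le hn0 with hn0' | hnpos
    · -- n = 0 : δ vanishes on B
      have hsum0 : ∑ i ∈ B, δ i ^ 2 = 0 := by
        have := hn0'.symm
        rw [hn, l2_restr] at this
        exact (Real.sqrt_eq_zero (Finset.sum_nonneg fun i _ => sq_nonneg _)).mp this
      have hzero : ∀ i ∈ B, δ i = 0 := by
        intro i hi
        have := (Finset.sum_eq_zero_iff_of_nonneg fun i _ => sq_nonneg (δ i)).mp hsum0 i hi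
        exact pow_eq_zero_iff (n := 2) (by norm_num) |>.mp this
      rw [Finset.sum_eq_zero fun i hi => by rw [hzero i hi, mul_zero]]
      rw [abs_zero, ← hn0']
      simp
    · set t : Fin p → ℝ := fun i => restr B δ i / n with ht
      have hl2t : l2 t = 1 := by
        unfold l2
        have : ∑ i, t i ^ 2 = (∑ i, restr B δ i ^ 2) / n ^ 2 := by
          rw [ht, Finset.sum_div]
          exact Finset.sum_congr rfl fun i _ => by rw [div_pow]
        rw [this, Real.sqrt_div (Finset.sum_nonneg fun i _ => sq_nonneg _),
          Real.sqrt_sq hn0]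
        rw [show Real.sqrt (∑ i, restr B δ i ^ 2) = n from rfl]
        exact div_self (ne_of_gt hnpos)
      have htsupp : (Finset.univ.filter fun i => t i ≠ 0).card ≤ s := by
        have hsub : (Finset.univ.filter fun i => t i ≠ 0) ⊆ B := by
          intro i hi
          rw [Finset.mem_filter] at hi
          by_contra hiB
          exact hi.2 (by simp [ht, restr, hiB])
        exact le_trans (Finset.card_le_card hsub) hBs
      have hts := hfS t ⟨hl2t, htsupp⟩
      have heq : ∑ i, restr B δ i * w i = n * ∑ i, t i * w i := by
        rw [ht, Finset.mul_sum]
        refine Finset.sum_congr rfl fun i _ => ?_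
        field_simp
      rw [hsum_eq, heq, abs_mul, abs_of_nonneg hn0]
      exact mul_le_mul_of_nonneg_left hts hn0
  -- δ ≠ 0
  have hδne : δ ≠ 0 := by
    intro h0
    rw [h0, Matrix.mulVec_zero] at hδnorm
    unfold l2 at hδnorm
    simp at hδnorm
  -- RE bound
  have hT0l2 : l2 (restr T0 δ) ≤ K := by
    have := hRE T0 (le_of_eq hT0card) δ hδne hcone
    rwa [hδnorm, mul_one] at this
  -- min over T0
  have hT0ne : T0.Nonempty := Finset.card_pos.mp (by omega)
  obtain ⟨i1, hi1, hi1min⟩ := Finset.exists_min_image T0 (fun i => |δ i|) hT0ne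
  set c := |δ i1| with hc
  have hTc : ∀ j ∈ T0ᶜ, |δ j| ≤ c := fun j hj => hT0max i1 hi1 j (Finset.mem_compl.mp hj)
  have hkey := key hs δ w S hS0 hB T0ᶜ c (abs_nonneg _) hTc
  set a := ∑ i ∈ T0, |δ i| with ha
  set b := ∑ i ∈ T0ᶜ, |δ i| with hb
  set L := l2 (restr T0 δ) with hL
  have ha0 : 0 ≤ a := Finset.sum_nonneg fun i _ => abs_nonneg _
  have hL0 : 0 ≤ L := Real.sqrt_nonneg _
  -- √s * c ≤ a / √s
  have hqc : Real.sqrt s * c ≤ a / Real.sqrt s := by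
    rw [le_div_iff₀ hsqs]
    have h1 : Real.sqrt ↑s * c * Real.sqrt ↑s = (s : ℝ) * c := by
      rw [mul_comm (Real.sqrt ↑s) c, mul_assoc, Real.mul_self_sqrt (Nat.cast_nonneg s)]
      ring
    rw [h1]
    calc (s:ℝ) * c = ∑ _i ∈ T0, c := by rw [Finset.sum_const, nsmul_eq_mul, hT0card]
      _ ≤ a := Finset.sum_le_sum fun i hi => hi1min i hi
  -- cone in terms of a, b
  have hba : b ≤ k0 * a := by
    have := hcone
    rwa [l1_restr, l1_restr] at this
  -- a ≤ √s * L
  have haL : a ≤ Real.sqrt s * L := by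
    have hcs := Finset.sum_mul_sq_le_sq_mul_sq T0 (fun i => |δ i|) (fun _ => (1:ℝ))
    simp only [mul_one, one_pow] at hcs
    have hcs2 : a ^ 2 ≤ (∑ i ∈ T0, δ i ^ 2) * s := by
      calc a ^ 2 ≤ (∑ i ∈ T0, |δ i| ^ 2) * ∑ _i ∈ T0, (1:ℝ) := hcs
        _ = (∑ i ∈ T0, δ i ^ 2) * s := by
            rw [Finset.sum_const, nsmul_eq_mul, mul_one, hT0card]
            congr 1
            exact Finset.sum_congr rfl fun i _ => sq_abs _
    calc a = Real.sqrt (a ^ 2) := (Real.sqrt_sq ha0).symm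
      _ ≤ Real.sqrt ((∑ i ∈ T0, δ i ^ 2) * s) := Real.sqrt_le_sqrt hcs2
      _ = Real.sqrt s * L := by
          rw [Real.sqrt_mul (Finset.sum_nonneg fun i _ => sq_nonneg _), hL, l2_restr]
          ring
  have haq : a / Real.sqrt s ≤ L := by
    rw [div_le_iff₀ hsqs]
    linarith [haL]
  -- split the sum
  have hsplit : ∑ i, w i * δ i = ∑ i ∈ T0, w i * δ i + ∑ i ∈ T0ᶜ, w i * δ i :=
    (Finset.sum_add_sum_compl T0 _).symm
  have hT0bound : |∑ i ∈ T0, w i * δ i| ≤ L * S := hB T0 (le_of_eq hT0card)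
  -- finish
  have hqcK : Real.sqrt s * c ≤ K := le_trans hqc (le_trans haq hT0l2)
  have hbqK : b / Real.sqrt s ≤ k0 * K := by
    calc b / Real.sqrt s ≤ k0 * a / Real.sqrt s := by
          gcongr
      _ = k0 * (a / Real.sqrt s) := by ring
      _ ≤ k0 * K := mul_le_mul_of_nonneg_left (le_trans haq hT0l2) (le_of_lt hk0)
  rw [hLHS, hsplit]
  calc |∑ i ∈ T0, w i * δ i + ∑ i ∈ T0ᶜ, w i * δ i|
      ≤ |∑ i ∈ T0, w i * δ i| + |∑ i ∈ T0ᶜ, w i * δ i| := abs_add_le _ _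
    _ ≤ L * S + S * (Real.sqrt s * c + b / Real.sqrt s) := add_le_add hT0bound hkey
    _ ≤ K * S + S * (K + k0 * K) := by
        refine add_le_add (mul_le_mul_of_nonneg_right hT0l2 hS0) ?_
        exact mul_le_mul_of_nonneg_left (add_le_add hqcK hbqK) hS0
    _ = (k0 + 2) * K * S := by ring
end
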